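/- Let U : ℕ → ℝ → ℝ → ℝ be defined by U 0 x y = 1, U 1 x y = 2x, U (2i) x y = 2y·U (2i−1) x y − U (2i−2) x y and U (2i+1) x y = 2x·U (2i) x y − U (2i−1) x y for i ≥ 1. Then for every i ∈ ℕ there exists a polynomial Q over ℤ with natural degree i and leading coefficient 4^i such that for all real x, y one has U (2i+1) x y = 2x·(Q.map (Int.cast : ℤ → ℝ)).eval (x·y). -/
import Mathlib

open Polynomial

noncomputable def PQ : ℕ → Polynomial ℤ × Polynomial ℤ
  | 0 => (1, 1)
  | (i+1) =>
      let p := 4 * X * (PQ i).2 - (PQ i).1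
      (p, p - (PQ i).2)

lemma aux_sub (p q : Polynomial ℤ) (h : q.natDegree < p.natDegree) :
    (p - q).natDegree = p.natDegree ∧ (p - q).leadingCoeff = p.leadingCoeff := by
  have hd : q.degree < p.degree := by
    apply Polynomial.degree_lt_degree h
  constructor
  · exact Polynomial.natDegree_sub_eq_left_of_natDegree_lt h
  · rw [Polynomial.leadingCoeff, Polynomial.natDegree_sub_eq_left_of_natDegree_lt h,
      Polynomial.coeff_sub, Polynomial.coeff_natDegree_eq_zero_of_degree_lt hd, sub_zero]
    rfl

lemma PQ_succ (n : ℕ) : PQ (n+1) =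
    (4 * X * (PQ n).2 - (PQ n).1, 4 * X * (PQ n).2 - (PQ n).1 - (PQ n).2) := rfl

lemma PQ_deg (i : ℕ) :
    (PQ i).1.natDegree = i ∧ (PQ i).1.leadingCoeff = 4 ^ i ∧
    (PQ i).2.natDegree = i ∧ (PQ i).2.leadingCoeff = 4 ^ i := by
  induction i with
  | zero => simp [PQ]
  | succ n ih =>
    obtain ⟨h1, h2, h3, h4⟩ := ih
    have hx : (4 * X * (PQ n).2).natDegree = n + 1 := by
      rw [Polynomial.natDegree_mul (by
        intro h
        simpa using congrArg (Polynomial.coeff · 1) h) (by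
        intro h
        rw [h] at h4
        simp at h4
        exact absurd h4.symm (by positivity)), h3]
      simp [Polynomial.natDegree_X]
      ring
    have hlc : (4 * X * (PQ n).2).leadingCoeff = 4 ^ (n+1) := by
      rw [Polynomial.leadingCoeff_mul, h4]
      have : (4 * X : Polynomial ℤ).leadingCoeff = 4 := by
        rw [show (4 : Polynomial ℤ) = Polynomial.C 4 by norm_num,
          Polynomial.leadingCoeff_mul, Polynomial.leadingCoeff_C,
          Polynomial.leadingCoeff_X, mul_one]
      rw [this]; ring
    have hP := aux_sub (4 * X * (PQ n).2) (PQ n).1 (by omega)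
    have hPd : (PQ (n+1)).1.natDegree = n + 1 := by
      rw [PQ_succ, hP.1, hx]
    have hPl : (PQ (n+1)).1.leadingCoeff = 4 ^ (n+1) := by
      rw [PQ_succ]; rw [hP.2, hlc]
    have hQ := aux_sub (PQ (n+1)).1 (PQ n).2 (by omega)
    have hQ' : (PQ (n+1)).2 = (PQ (n+1)).1 - (PQ n).2 := by rw [PQ_succ]
    refine ⟨hPd, hPl, ?_, ?_⟩
    · rw [hQ', hQ.1, hPd]
    · rw [hQ', hQ.2, hPl]

theorem stmt_9 (U : ℕ → ℝ → ℝ → ℝ)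
    (hU0 : ∀ x y : ℝ, U 0 x y = 1)
    (hU1 : ∀ x y : ℝ, U 1 x y = 2 * x)
    (hUeven : ∀ i : ℕ, 1 ≤ i → ∀ x y : ℝ,
      U (2 * i) x y = 2 * y * U (2 * i - 1) x y - U (2 * i - 2) x y)
    (hUodd : ∀ i : ℕ, 1 ≤ i → ∀ x y : ℝ,
      U (2 * i + 1) x y = 2 * x * U (2 * i) x y - U (2 * i - 1) x y) :
    ∀ i : ℕ, ∃ Q : Polynomial ℤ, Q.natDegree = i ∧ Q.leadingCoeff = 4 ^ i ∧
      ∀ x y : ℝ, U (2 * i + 1) x y = 2 * x * (Q.map (Int.castRingHom ℝ)).eval (x * y) := by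
  have key : ∀ i : ℕ, ∀ x y : ℝ,
      U (2 * i) x y = ((PQ i).1.map (Int.castRingHom ℝ)).eval (x * y) ∧
      U (2 * i + 1) x y = 2 * x * ((PQ i).2.map (Int.castRingHom ℝ)).eval (x * y) := by
    intro i
    induction i with
    | zero => intro x y; simp [PQ, hU0, hU1]
    | succ n ih =>
      intro x y
      obtain ⟨hP, hQ⟩ := ih x y
      have h1 : 2 * (n+1) - 1 = 2 * n + 1 := by omega
      have h2 : 2 * (n+1) - 2 = 2 * n := by omega
      have hE := hUeven (n+1) (by omega) x y
      rw [h1, h2, hP, hQ] at hE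
      have hPn1 : U (2 * (n+1)) x y
          = ((PQ (n+1)).1.map (Int.castRingHom ℝ)).eval (x * y) := by
        rw [hE, PQ_succ]
        simp [Polynomial.eval_mul, Polynomial.eval_sub]
        ring
      refine ⟨hPn1, ?_⟩
      have hO := hUodd (n+1) (by omega) x y
      rw [h1, hQ, hPn1] at hO
      rw [hO, PQ_succ]
      simp [Polynomial.eval_sub]
      ring
  intro i
  exact ⟨(PQ i).2, (PQ_deg i).2.2.1, (PQ_deg i).2.2.2, fun x y => (key i x y).2⟩
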